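/- Let K ≥ 1 and let f = h + conj∘g be a sense-preserving, K-quasiconformal harmonic mapping on 𝔻. Let λ ∈ (0,1), r₁ ∈ [0,1) and ζ ∈ ℂ with |ζ| = 1, and suppose Re(ζ·h''(ηζ)/h'(ηζ)) < (2η − 2λ)/(1 − η²) for all η ∈ [r₁, 1). Then for all r, ρ with r₁ ≤ r ≤ ρ < 1, |h'(ρζ)| + |g'(ρζ)| ≤ (2K/(1+K))·(|h'(rζ)| + |g'(rζ)|)·((1−ρ)/(1−r))^{λ−1}. -/

import Mathlib

open Complex Metric Set MeasureTheory Filter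

theorem stmt_19 (K : ℝ) (hK : 1 ≤ K) (h g f : ℂ → ℂ) (lam r₁ : ℝ) (ζ : ℂ)
    (hh : AnalyticOnNhd ℂ h (Metric.ball (0:ℂ) 1)) (hg : AnalyticOnNhd ℂ g (Metric.ball (0:ℂ) 1))
    (hf : ∀ z, f z = h z + (starRingEnd ℂ) (g z))
    (fsp : ∀ z ∈ Metric.ball (0:ℂ) 1, ‖deriv g z‖ < ‖deriv h z‖)
    (hqc : ∀ z ∈ Metric.ball (0:ℂ) 1,
      ‖deriv h z‖ + ‖deriv g z‖
        ≤ K * (‖deriv h z‖ - ‖deriv g z‖))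
    (hlam : lam ∈ Set.Ioo (0:ℝ) 1) (hr₁ : 0 ≤ r₁) (hr₁1 : r₁ < 1)
    (hζ : ‖ζ‖ = 1)
    (hre : ∀ η : ℝ, r₁ ≤ η → η < 1 →
      (ζ * deriv (deriv h) ((η:ℂ)*ζ) / deriv h ((η:ℂ)*ζ)).re < (2*η - 2*lam)/(1 - η^2)) :
    ∀ r ρ : ℝ, r₁ ≤ r → r ≤ ρ → ρ < 1 →
      (‖deriv h ((ρ:ℂ)*ζ)‖ + ‖deriv g ((ρ:ℂ)*ζ)‖)
        ≤ (2*K/(1+K)) * (‖deriv h ((r:ℂ)*ζ)‖ + ‖deriv g ((r:ℂ)*ζ)‖) * ((1-ρ)/(1-r)) ^ (lam-1) := by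
  obtain ⟨hlam0, hlam1⟩ := hlam
  intro r ρ hr₁r hrρ hρ1
  have hr0 : 0 ≤ r := le_trans hr₁ hr₁r
  have hρ0 : 0 ≤ ρ := le_trans hr0 hrρ
  have hr1 : r < 1 := lt_of_le_of_lt hrρ hρ1
  -- membership
  have hmem : ∀ t:ℝ, -1 < t → t < 1 → ((t:ℂ)*ζ) ∈ Metric.ball (0:ℂ) 1 := by
    intro t h1 h2
    rw [mem_ball_zero_iff, norm_mul, hζ, Complex.norm_real, Real.norm_eq_abs, mul_one]
    exact abs_lt.mpr ⟨h1, h2⟩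
  have habs : ∀ t:ℝ, -1 < t → t < 1 → 0 < ‖deriv h ((t:ℂ)*ζ)‖ :=
    fun t h1 h2 => lt_of_le_of_lt (norm_nonneg _) (fsp _ (hmem t h1 h2))
  have hne : ∀ t:ℝ, -1 < t → t < 1 → deriv h ((t:ℂ)*ζ) ≠ 0 := by
    intro t h1 h2 h0
    have := habs t h1 h2
    rw [h0] at this; simp at this
  -- the auxiliary function
  set F : ℝ → ℝ := fun s => Real.log (Complex.normSq (deriv h ((s:ℂ)*ζ))) / 2
      + ((1-lam)*Real.log (1-s) + (1+lam)*Real.log (1+s)) with hFdef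
  have key : ∀ t:ℝ, -1 < t → t < 1 → HasDerivAt F
      ((ζ * deriv (deriv h) ((t:ℂ)*ζ) / deriv h ((t:ℂ)*ζ)).re
        + ((1-lam)*((1-t)⁻¹*(-1)) + (1+lam)*((1+t)⁻¹*1))) t := by
    intro t h1 h2
    have hmemt := hmem t h1 h2
    have h1t : (1:ℝ) - t ≠ 0 := by intro h0; nlinarith
    have h1t' : (1:ℝ) + t ≠ 0 := by intro h0; nlinarith
    -- part 1 : log normSq / 2
    have part1 : HasDerivAt (fun s : ℝ => Real.log (Complex.normSq (deriv h ((s:ℂ)*ζ))) / 2)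
        ((ζ * deriv (deriv h) ((t:ℂ)*ζ) / deriv h ((t:ℂ)*ζ)).re) t := by
      set A : ℝ → ℂ := fun s => deriv h ((s:ℂ)*ζ) with hA
      set c : ℂ := ζ * deriv (deriv h) ((t:ℂ)*ζ) with hc
      have hAt : HasDerivAt A c t := by
        rw [hA, hc]
        have hd : HasDerivAt (deriv h) (deriv (deriv h) ((t:ℂ)*ζ)) ((t:ℂ)*ζ) :=
          ((hh.deriv) _ hmemt).differentiableAt.hasDerivAt
        have hm : HasDerivAt (fun z:ℂ => z*ζ) ζ (t:ℂ) := by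
          simpa using (hasDerivAt_id (t:ℂ)).mul_const ζ
        have := (HasDerivAt.comp (t:ℂ) hd hm).comp_ofReal
        simpa [Function.comp, mul_comm] using this
      have hrepart : HasDerivAt (fun s => (A s).re) c.re t := by
        have := Complex.reCLM.hasFDerivAt.comp_hasDerivAt t hAt
        exact this
      have himpart : HasDerivAt (fun s => (A s).im) c.im t := by
        have := Complex.imCLM.hasFDerivAt.comp_hasDerivAt t hAt
        exact this
      have hnsq : HasDerivAt (fun s => Complex.normSq (A s))
          (2*((A t).re*c.re + (A t).im*c.im)) t := by
        have h2' := (hrepart.mul hrepart).add (himpart.mul himpart)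
        have hfun : (fun s => Complex.normSq (A s)) = fun s => (A s).re*(A s).re + (A s).im*(A s).im :=
          funext fun s => Complex.normSq_apply _
        rw [hfun]
        exact h2'.congr_deriv (by ring)
      have hAne : A t ≠ 0 := hne t h1 h2
      have hnsqpos : 0 < Complex.normSq (A t) := Complex.normSq_pos.mpr hAne
      have hlog := (Real.hasDerivAt_log (ne_of_gt hnsqpos)).comp t hnsq
      have hfin := hlog.div_const 2
      refine hfin.congr_deriv ?_
      rw [Complex.div_re]
      have hAne' : Complex.normSq (deriv h ((t:ℂ)*ζ)) ≠ 0 := ne_of_gt hnsqpos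
      simp only [hA]
      field_simp
    -- part 2 : logs
    have hL1 : HasDerivAt (fun s:ℝ => Real.log (1-s)) ((1-t)⁻¹*(-1)) t := by
      have inner : HasDerivAt (fun s:ℝ => 1-s) (-1) t := by
        simpa using (hasDerivAt_id t).const_sub 1
      exact (Real.hasDerivAt_log h1t).comp t inner
    have hL2 : HasDerivAt (fun s:ℝ => Real.log (1+s)) ((1+t)⁻¹*1) t := by
      have inner : HasDerivAt (fun s:ℝ => 1+s) 1 t := by
        simpa using (hasDerivAt_id t).const_add 1
      exact (Real.hasDerivAt_log h1t').comp t inner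
    exact part1.add ((hL1.const_mul (1-lam)).add (hL2.const_mul (1+lam)))
  -- antitone
  have hanti : AntitoneOn F (Icc r ρ) := by
    apply antitoneOn_of_deriv_nonpos (convex_Icc r ρ)
    · intro t ht
      exact (key t (by linarith [ht.1]) (by linarith [ht.2])).continuousAt.continuousWithinAt
    · rw [interior_Icc]
      intro t ht
      exact (key t (by linarith [ht.1]) (by linarith [ht.2])).differentiableAt.differentiableWithinAt
    · rw [interior_Icc]
      intro t ht
      have h1 : (-1:ℝ) < t := by linarith [ht.1]
      have h2 : t < 1 := by linarith [ht.2]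
      rw [(key t h1 h2).deriv]
      have hb := hre t (by linarith [ht.1]) h2
      have h1t : (1:ℝ) - t ≠ 0 := by intro h0; nlinarith
      have h1t' : (1:ℝ) + t ≠ 0 := by intro h0; nlinarith
      have h1t2 : (1:ℝ) - t^2 ≠ 0 := by intro h0; nlinarith
      have heq : (1-lam)*((1-t)⁻¹*(-1)) + (1+lam)*((1+t)⁻¹*1) = -((2*t-2*lam)/(1-t^2)) := by
        field_simp
        ring
      rw [heq]
      linarith
  have hFineq : F ρ ≤ F r := hanti ⟨le_refl r, hrρ⟩ ⟨hrρ, le_refl ρ⟩ hrρ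
  -- unfold the logs
  have hlogns : ∀ t:ℝ, -1 < t → t < 1 →
      Real.log (Complex.normSq (deriv h ((t:ℂ)*ζ))) / 2 = Real.log ‖deriv h ((t:ℂ)*ζ)‖ := by
    intro t h1 h2
    rw [← Complex.sq_norm, Real.log_pow]
    push_cast; ring
  set a := ‖deriv h ((r:ℂ)*ζ)‖ with hadef
  set b := ‖deriv h ((ρ:ℂ)*ζ)‖ with hbdef
  have ha : 0 < a := habs r (by linarith) hr1
  have hb : 0 < b := habs ρ (by linarith) hρ1
  have hlog : Real.log b + ((1-lam)*Real.log (1-ρ) + (1+lam)*Real.log (1+ρ))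
      ≤ Real.log a + ((1-lam)*Real.log (1-r) + (1+lam)*Real.log (1+r)) := by
    have h1 := hFineq
    rw [hFdef] at h1
    simp only at h1
    rwa [hlogns r (by linarith) hr1, hlogns ρ (by linarith) hρ1] at h1
  have hmono : Real.log (1+r) ≤ Real.log (1+ρ) :=
    Real.log_le_log (by linarith) (by linarith)
  have hdivpos : (0:ℝ) < (1-r)/(1-ρ) := div_pos (by linarith) (by linarith)
  have hkey2 : Real.log b ≤ Real.log (a * ((1-r)/(1-ρ)) ^ (1-lam)) := by
    rw [Real.log_mul (ne_of_gt ha) (ne_of_gt (Real.rpow_pos_of_pos hdivpos _)),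
        Real.log_rpow hdivpos, Real.log_div (by linarith) (by linarith)]
    have hterm : (1+lam)*(Real.log (1+r) - Real.log (1+ρ)) ≤ 0 :=
      mul_nonpos_of_nonneg_of_nonpos (by linarith) (by linarith)
    nlinarith [hlog, hterm]
  have hba : b ≤ a * ((1-r)/(1-ρ)) ^ (1-lam) := by
    have := Real.exp_le_exp.mpr hkey2
    rwa [Real.exp_log hb, Real.exp_log (by positivity)] at this
  have hPP : ((1-ρ)/(1-r)) ^ (lam-1) = ((1-r)/(1-ρ)) ^ (1-lam) := by
    have hnn : (0:ℝ) ≤ (1-ρ)/(1-r) := div_nonneg (by linarith) (by linarith)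
    rw [show lam-1 = -(1-lam) by ring, Real.rpow_neg hnn,
        ← Real.inv_rpow hnn, inv_div]
  rw [hPP]
  set P := ((1-r)/(1-ρ)) ^ (1-lam) with hPdef
  have hPpos : 0 < P := Real.rpow_pos_of_pos hdivpos _
  have hgρ : 0 ≤ ‖deriv g ((ρ:ℂ)*ζ)‖ := norm_nonneg _
  have hgr : 0 ≤ ‖deriv g ((r:ℂ)*ζ)‖ := norm_nonneg _
  have hqcρ := hqc _ (hmem ρ (by linarith) hρ1)
  have h1K : (0:ℝ) < 1 + K := by linarith
  have hcnn : (0:ℝ) ≤ 2*K/(1+K) := div_nonneg (by linarith) (by linarith)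
  have step1 : b + ‖deriv g ((ρ:ℂ)*ζ)‖ ≤ 2*K/(1+K) * b := by
    rw [div_mul_eq_mul_div, le_div_iff₀ h1K]
    nlinarith [hqcρ]
  have step2 : 2*K/(1+K) * b ≤ 2*K/(1+K) * (a*P) := mul_le_mul_of_nonneg_left hba hcnn
  have step3 : 2*K/(1+K) * (a*P) ≤ 2*K/(1+K) * (a + ‖deriv g ((r:ℂ)*ζ)‖) * P := by
    rw [mul_assoc]
    refine mul_le_mul_of_nonneg_left ?_ hcnn
    exact mul_le_mul_of_nonneg_right (by linarith) hPpos.le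
  linarith
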